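/- Let T' be a rooted tree and suppose a distinguishing coloring φ of T' with k colors exists. Define φ' top-down: φ'(root) = φ(root); for a child u of v, set φ'(u) = * (a new (k+1)-st color) if φ'(v) = φ(u), and φ'(u) = φ(u) otherwise. Then φ' is a proper coloring of T', and any automorphism preserving φ' also preserves φ; hence φ' is a distinguishing proper (k+1)-coloring. -/

import Mathlib

open SimpleGraph

noncomputable section

def ecc {V : Type*} [Fintype V] (G : SimpleGraph V) (v : V) : ℕ :=
  Finset.univ.sup fun u => G.dist u v

def graphCenter {V : Type*} [Fintype V] (G : SimpleGraph V) : Set V :=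
  {v | ∀ u, ecc G v ≤ ecc G u}

def desc {V : Type*} (G : SimpleGraph V) (x v : V) : Set V :=
  {u | G.dist u x = G.dist u v + G.dist v x}

lemma self_mem_desc {V : Type*} (G : SimpleGraph V) (x v : V) : v ∈ desc G x v := by
  simp [desc]

def Distinguishes {V α : Type*} (G : SimpleGraph V) (r : V) (φ : V → α) : Prop :=
  ∀ σ : G ≃g G, σ r = r → (∀ w, φ (σ w) = φ w) → ∀ w, σ w = w

def DistinguishesU {V α : Type*} (G : SimpleGraph V) (φ : V → α) : Prop :=
  ∀ σ : G ≃g G, (∀ w, φ (σ w) = φ w) → ∀ w, σ w = w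

def RootedIso {V W : Type*} (G : SimpleGraph V) (H : SimpleGraph W) (r : V) (s : W) : Prop :=
  ∃ π : G ≃g H, π r = s

def ColEquiv {V W α : Type*} (G : SimpleGraph V) (H : SimpleGraph W) (r : V) (s : W)
    (φ : V → α) (ψ : W → α) : Prop :=
  ∃ π : G ≃g H, π r = s ∧ ∀ w, φ w = ψ (π w)

def IsProper {V α : Type*} (G : SimpleGraph V) (φ : V → α) : Prop :=
  ∀ a b, G.Adj a b → φ a ≠ φ b

def DCount {V : Type*} (G : SimpleGraph V) (r : V) (k : ℕ) : ℕ :=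
  Nat.card (Quot fun φ ψ : {f : V → Fin k // Distinguishes G r f} =>
    ∃ σ : G ≃g G, σ r = r ∧ ∀ w, φ.1 w = ψ.1 (σ w))

def DCountL {V : Type*} (G : SimpleGraph V) (r : V) (L : V → Finset ℕ) : ℕ :=
  Nat.card (Quot fun φ ψ : {f : V → ℕ // (∀ v, f v ∈ L v) ∧ Distinguishes G r f} =>
    ∃ σ : G ≃g G, σ r = r ∧ ∀ w, φ.1 w = ψ.1 (σ w))

def DChiCount {V : Type*} (G : SimpleGraph V) (r : V) (k : ℕ) : ℕ :=
  Nat.card (Quot fun φ ψ : {f : V → Fin k // IsProper G f ∧ Distinguishes G r f} =>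
    ∃ σ : G ≃g G, σ r = r ∧ ∀ w, φ.1 w = ψ.1 (σ w))

def DChiCountI {V : Type*} (G : SimpleGraph V) (r : V) (k : ℕ) (i : Fin k) : ℕ :=
  Nat.card (Quot fun φ ψ : {f : V → Fin k // IsProper G f ∧ Distinguishes G r f ∧ f r = i} =>
    ∃ σ : G ≃g G, σ r = r ∧ ∀ w, φ.1 w = ψ.1 (σ w))

def DChiCountLI {V : Type*} (G : SimpleGraph V) (r : V) (L : V → Finset ℕ) (i : ℕ) : ℕ :=
  Nat.card (Quot fun φ ψ : {f : V → ℕ // (∀ v, f v ∈ L v) ∧ IsProper G f ∧ Distinguishes G r f ∧ f r = i} =>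
    ∃ σ : G ≃g G, σ r = r ∧ ∀ w, φ.1 w = ψ.1 (σ w))

def DNum {V : Type*} (G : SimpleGraph V) (r : V) : ℕ :=
  sInf {k | ∃ φ : V → Fin k, Distinguishes G r φ}

def DListNum {V : Type*} (G : SimpleGraph V) (r : V) : ℕ :=
  sInf {k | ∀ L : V → Finset ℕ, (∀ v, (L v).card = k) →
    ∃ φ : V → ℕ, (∀ v, φ v ∈ L v) ∧ Distinguishes G r φ}

def DNumU {V : Type*} (G : SimpleGraph V) : ℕ :=
  sInf {k | ∃ φ : V → Fin k, DistinguishesU G φ}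

def DListNumU {V : Type*} (G : SimpleGraph V) : ℕ :=
  sInf {k | ∀ L : V → Finset ℕ, (∀ v, (L v).card = k) →
    ∃ φ : V → ℕ, (∀ v, φ v ∈ L v) ∧ DistinguishesU G φ}

def chiD {V : Type*} (G : SimpleGraph V) (r : V) : ℕ :=
  sInf {k | ∃ φ : V → Fin k, IsProper G φ ∧ Distinguishes G r φ}

def chiDL {V : Type*} (G : SimpleGraph V) (r : V) : ℕ :=
  sInf {k | ∀ L : V → Finset ℕ, (∀ v, (L v).card = k) →
    ∃ φ : V → ℕ, (∀ v, φ v ∈ L v) ∧ IsProper G φ ∧ Distinguishes G r φ}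

def chiDU {V : Type*} (G : SimpleGraph V) : ℕ :=
  sInf {k | ∃ φ : V → Fin k, IsProper G φ ∧ DistinguishesU G φ}

def chiDLU {V : Type*} (G : SimpleGraph V) : ℕ :=
  sInf {k | ∀ L : V → Finset ℕ, (∀ v, (L v).card = k) →
    ∃ φ : V → ℕ, (∀ v, φ v ∈ L v) ∧ IsProper G φ ∧ DistinguishesU G φ}

def subdiv {V : Type*} (G : SimpleGraph V) (u v : V) : SimpleGraph (V ⊕ Unit) :=
  SimpleGraph.fromRel fun a b =>
    match a, b with
    | Sum.inl a, Sum.inl b => G.Adj a b ∧ ¬(a = u ∧ b = v) ∧ ¬(a = v ∧ b = u)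
    | Sum.inl a, Sum.inr _ => a = u ∨ a = v
    | Sum.inr _, _ => False

def childOf {V : Type*} (G : SimpleGraph V) (r v u : V) : Prop :=
  G.Adj v u ∧ G.dist u r = G.dist v r + 1
section Aux

variable {V : Type*} {G : SimpleGraph V}

lemma aux_iso_dist_le (hc : G.Connected) (σ : G ≃g G) (a b : V) :
    G.dist (σ a) (σ b) ≤ G.dist a b := by
  obtain ⟨p, hp⟩ := hc.exists_walk_length_eq_dist a b
  calc G.dist (σ a) (σ b) ≤ (p.map σ.toHom).length := SimpleGraph.dist_le _
    _ = G.dist a b := by rw [SimpleGraph.Walk.length_map, hp]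

lemma aux_iso_dist (hc : G.Connected) (σ : G ≃g G) (a b : V) :
    G.dist (σ a) (σ b) = G.dist a b := by
  refine le_antisymm (aux_iso_dist_le hc σ a b) ?_
  have h := aux_iso_dist_le hc σ.symm (σ a) (σ b)
  simpa using h

lemma aux_exists_parent (hc : G.Connected) (r w : V) (hw : w ≠ r) :
    ∃ v, childOf G r v w := by
  obtain ⟨p, hp⟩ := hc.exists_walk_length_eq_dist w r
  have hd : 0 < G.dist w r := hc.pos_dist_of_ne hw
  cases p with
  | nil => exact absurd rfl hw
  | @cons _ v _ h q =>
    refine ⟨v, h.symm, ?_⟩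
    simp only [SimpleGraph.Walk.length_cons] at hp
    have h1 : G.dist v r ≤ q.length := SimpleGraph.dist_le q
    have h2 : G.dist w r ≤ G.dist w v + G.dist v r := hc.dist_triangle
    have h3 : G.dist w v = 1 := SimpleGraph.dist_eq_one_iff_adj.2 h
    omega

lemma aux_dist_ne_of_adj (hG : G.IsTree) (r u v : V) (h : G.Adj u v) :
    G.dist u r ≠ G.dist v r := by
  classical
  intro he
  obtain ⟨p, hp, hplen⟩ := hG.isConnected.exists_path_of_dist u r
  obtain ⟨q, hq, hqlen⟩ := hG.isConnected.exists_path_of_dist v r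
  have hu : u ∉ q.support := by
    intro hu
    have hspec := congrArg SimpleGraph.Walk.length (q.take_spec hu)
    rw [SimpleGraph.Walk.length_append] at hspec
    have h1 : G.dist u r ≤ (q.dropUntil u hu).length := SimpleGraph.dist_le _
    have h2 : (q.takeUntil u hu).length ≠ 0 := by
      intro h0
      exact h.ne' (SimpleGraph.Walk.eq_of_length_eq_zero h0)
    omega
  have hcons : (SimpleGraph.Walk.cons h q).IsPath := hq.cons hu
  have := hG.IsAcyclic.path_unique ⟨p, hp⟩ ⟨SimpleGraph.Walk.cons h q, hcons⟩
  have hlen := congrArg (fun x : G.Path u r => x.1.length) this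
  simp only [SimpleGraph.Walk.length_cons] at hlen
  omega

end Aux


theorem stmt19 {V : Type*} [Fintype V] (G : SimpleGraph V) (hG : G.IsTree)
    (r : V) (k : ℕ) (φ : V → Fin k) (hφ : Distinguishes G r φ)
    (φ' : V → Fin (k + 1))
    (hroot : φ' r = (φ r).castSucc)
    (hrec : ∀ v u : V, childOf G r v u →
      φ' u = if φ' v = (φ u).castSucc then Fin.last k else (φ u).castSucc) :
    IsProper G φ' ∧
    (∀ σ : G ≃g G, σ r = r → (∀ w, φ' (σ w) = φ' w) → ∀ w, φ (σ w) = φ w) ∧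
    Distinguishes G r φ' := by
  have hc := hG.isConnected
  -- main recovery claim
  have key : ∀ σ : G ≃g G, σ r = r → (∀ w, φ' (σ w) = φ' w) → ∀ w, φ (σ w) = φ w := by
    intro σ hr hpres w
    by_cases hw : w = r
    · subst hw; rw [hr]
    · obtain ⟨v, hv⟩ := aux_exists_parent hc r w hw
      have hσv : childOf G r (σ v) (σ w) := by
        refine ⟨σ.map_adj_iff.2 hv.1, ?_⟩
        have d1 : G.dist (σ w) r = G.dist w r := by
          conv_lhs => rw [← hr]
          exact aux_iso_dist hc σ w r
        have d2 : G.dist (σ v) r = G.dist v r := by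
          conv_lhs => rw [← hr]
          exact aux_iso_dist hc σ v r
        rw [d1, d2]; exact hv.2
      have e1 := hrec v w hv
      have e2 := hrec (σ v) (σ w) hσv
      rw [hpres v, hpres w] at e2
      by_cases hcase : φ' v = (φ w).castSucc
      · rw [if_pos hcase] at e1
        have hne : φ' w ≠ (φ (σ w)).castSucc := by
          rw [e1]
          intro hx
          exact absurd hx.symm (Fin.castSucc_lt_last _).ne
        -- then the if in e2 must be positive too
        by_cases hcase2 : φ' v = (φ (σ w)).castSucc
        · have := hcase2.symm.trans hcase
          exact Fin.castSucc_injective k this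
        · rw [if_neg hcase2] at e2
          exact absurd e2 hne
      · rw [if_neg hcase] at e1
        by_cases hcase2 : φ' v = (φ (σ w)).castSucc
        · rw [if_pos hcase2] at e2
          rw [e2] at e1
          exact absurd e1.symm (Fin.castSucc_lt_last _).ne
        · rw [if_neg hcase2] at e2
          rw [e1] at e2
          exact (Fin.castSucc_injective k e2.symm)
  refine ⟨?_, key, ?_⟩
  · intro a b hab hEq
    have hor : childOf G r a b ∨ childOf G r b a := by
      have hne := aux_dist_ne_of_adj hG r a b hab
      have h1 : G.dist a b = 1 := SimpleGraph.dist_eq_one_iff_adj.2 hab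
      have t1 : G.dist a r ≤ G.dist a b + G.dist b r := hc.dist_triangle
      have t2 : G.dist b r ≤ G.dist b a + G.dist a r := hc.dist_triangle
      have h2 : G.dist b a = 1 := SimpleGraph.dist_eq_one_iff_adj.2 hab.symm
      rcases lt_or_gt_of_ne hne with hlt | hlt
      · exact Or.inl ⟨hab, by omega⟩
      · exact Or.inr ⟨hab.symm, by omega⟩
    rcases hor with hch | hch
    · have e := hrec a b hch
      by_cases hcase : φ' a = (φ b).castSucc
      · rw [if_pos hcase] at e
        rw [e, hcase] at hEq
        exact absurd hEq (Fin.castSucc_lt_last _).ne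
      · rw [if_neg hcase] at e
        rw [e] at hEq
        exact hcase hEq
    · have e := hrec b a hch
      by_cases hcase : φ' b = (φ a).castSucc
      · rw [if_pos hcase] at e
        rw [e, hcase] at hEq
        exact absurd hEq.symm (Fin.castSucc_lt_last _).ne
      · rw [if_neg hcase] at e
        rw [e] at hEq
        exact hcase hEq.symm
  · intro σ hr hpres
    exact hφ σ hr (key σ hr hpres)
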